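/- For r ≥ 1, the number of pairwise inequivalent distinguishing labelings of K_2 using at most c colors is C(c, 2), and hence D(rK_2) = min{ c : C(c,2) ≥ r } for r ≥ 2. -/

import Mathlib

open SimpleGraph

/-- `φ` is a distinguishing labeling of `G`: the only automorphism preserving `φ` is the identity. -/
def IsDist {V α : Type*} (G : SimpleGraph V) (φ : V → α) : Prop :=
  ∀ π : G ≃g G, (∀ v, φ (π v) = φ v) → ∀ v, π v = v

/-- The distinguishing number `D(G)`. -/
noncomputable def distNum {V : Type*} (G : SimpleGraph V) : ℕ :=
  sInf {c : ℕ | ∃ φ : V → Fin c, IsDist G φ}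

/-- `S` is a fixing set of `G`. -/
def IsFixingSet {V : Type*} (G : SimpleGraph V) (S : Set V) : Prop :=
  ∀ π : G ≃g G, (∀ v ∈ S, π v = v) → ∀ v, π v = v

/-- The fixing number `Fix(G)`. -/
noncomputable def fixNum {V : Type*} (G : SimpleGraph V) : ℕ :=
  sInf {n : ℕ | ∃ S : Set V, S.ncard = n ∧ IsFixingSet G S}

/-- `D(G, c)`: the number of pairwise inequivalent distinguishing labelings of `G`
using at most `c` colors. -/
noncomputable def countDist {V : Type*} (G : SimpleGraph V) (c : ℕ) : ℕ :=
  Nat.card (Quot (fun φ ψ : {φ : V → Fin c // IsDist G φ} =>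
    ∃ π : G ≃g G, ∀ v, φ.1 v = ψ.1 (π v)))

/-- The disjoint union of `r` copies of `G`. -/
def copies {V : Type*} (r : ℕ) (G : SimpleGraph V) : SimpleGraph (Fin r × V) where
  Adj x y := x.1 = y.1 ∧ G.Adj x.2 y.2
  symm := by
    constructor
    rintro ⟨i, u⟩ ⟨j, v⟩ ⟨h1, h2⟩
    exact ⟨h1.symm, h2.symm⟩
  loopless := by
    constructor
    rintro ⟨i, u⟩ ⟨-, h⟩
    exact G.irrefl h

def topIso {V : Type*} (e : V ≃ V) : (⊤ : SimpleGraph V) ≃g (⊤ : SimpleGraph V) :=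
  ⟨e, by simp [top_adj]⟩

lemma isDist_top_iff {c : ℕ} (φ : Fin 2 → Fin c) :
    IsDist (⊤ : SimpleGraph (Fin 2)) φ ↔ φ 0 ≠ φ 1 := by
  constructor
  · intro hd h
    have := hd (topIso (Equiv.swap 0 1)) (by
      intro v
      fin_cases v <;> simp [topIso, h]) 0
    simp [topIso] at this
  · intro hne π hπ
    have h0 : π 0 = 0 := by
      by_contra h
      have h2 : π 0 = 1 := by omega
      have h1 := hπ 0
      rw [h2] at h1
      exact hne h1.symm
    have h1 : π 1 = 1 := by
      by_contra h
      have h2 : π 1 = 0 := by omega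
      exact absurd (π.injective (h2.trans h0.symm)) (by decide)
    intro v
    fin_cases v
    · exact h0
    · exact h1

lemma equiv_fin2 (e : Fin 2 ≃ Fin 2) : (e 0 = 0 ∧ e 1 = 1) ∨ (e 0 = 1 ∧ e 1 = 0) := by
  have h : e 0 ≠ e 1 := fun h => absurd (e.injective h) (by decide)
  omega

lemma card_two_subsets (c : ℕ) :
    Fintype.card {s : Finset (Fin c) // s.card = 2} = c.choose 2 := by
  rw [Fintype.card_subtype]
  have : (Finset.univ.filter (fun s : Finset (Fin c) => s.card = 2)) =
      Finset.powersetCard 2 Finset.univ := by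
    ext s
    simp [Finset.mem_powersetCard, Finset.subset_univ]
  rw [this, Finset.card_powersetCard, Finset.card_univ, Fintype.card_fin]

lemma countDist_top (c : ℕ) : countDist (⊤ : SimpleGraph (Fin 2)) c = c.choose 2 := by
  set rel := fun φ ψ : {φ : Fin 2 → Fin c // IsDist (⊤ : SimpleGraph (Fin 2)) φ} =>
    ∃ π : (⊤ : SimpleGraph (Fin 2)) ≃g ⊤, ∀ v, φ.1 v = ψ.1 (π v) with hrel
  have hresp : ∀ φ ψ, rel φ ψ →
      ({φ.1 0, φ.1 1} : Finset (Fin c)) = {ψ.1 0, ψ.1 1} := by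
    rintro φ ψ ⟨π, hπ⟩
    rcases equiv_fin2 π.toEquiv with ⟨e0, e1⟩ | ⟨e0, e1⟩
    · rw [hπ 0, hπ 1, show π 0 = 0 from e0, show π 1 = 1 from e1]
    · rw [hπ 0, hπ 1, show π 0 = 1 from e0, show π 1 = 0 from e1]
      exact Finset.pair_comm _ _
  let F : Quot rel → {s : Finset (Fin c) // s.card = 2} :=
    Quot.lift (fun φ => ⟨{φ.1 0, φ.1 1}, Finset.card_pair ((isDist_top_iff _).mp φ.2)⟩)
      (fun φ ψ h => Subtype.ext (hresp φ ψ h))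
  have hbij : Function.Bijective F := by
    constructor
    · rintro ⟨φ⟩ ⟨ψ⟩ h
      simp only [F, Subtype.mk.injEq] at h
      apply Quot.sound
      have hφ := (isDist_top_iff _).mp φ.2
      have hψ := (isDist_top_iff _).mp ψ.2
      have h0 : φ.1 0 = ψ.1 0 ∨ φ.1 0 = ψ.1 1 := by
        have : φ.1 0 ∈ ({ψ.1 0, ψ.1 1} : Finset (Fin c)) := by
          rw [← h]; simp
        simpa using this
      rcases h0 with h0 | h0
      · have h1 : φ.1 1 = ψ.1 1 := by
          have : φ.1 1 ∈ ({ψ.1 0, ψ.1 1} : Finset (Fin c)) := by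
            rw [← h]; simp
          simp only [Finset.mem_insert, Finset.mem_singleton] at this
          rcases this with h1 | h1
          · exact absurd (h0 ▸ h1 : φ.1 1 = φ.1 0) (Ne.symm hφ)
          · exact h1
        exact ⟨topIso (Equiv.refl _), by intro v; fin_cases v <;> simp [topIso, h0, h1]⟩
      · have h1 : φ.1 1 = ψ.1 0 := by
          have : φ.1 1 ∈ ({ψ.1 0, ψ.1 1} : Finset (Fin c)) := by
            rw [← h]; simp
          simp only [Finset.mem_insert, Finset.mem_singleton] at this
          rcases this with h1 | h1
          · exact h1
          · exact absurd (h0 ▸ h1 : φ.1 1 = φ.1 0) (Ne.symm hφ)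
        exact ⟨topIso (Equiv.swap 0 1), by intro v; fin_cases v <;> simp [topIso, h0, h1]⟩
    · rintro ⟨s, hs⟩
      obtain ⟨a, b, hab, rfl⟩ := Finset.card_eq_two.mp hs
      refine ⟨Quot.mk _ ⟨![a, b], ?_⟩, ?_⟩
      · rw [isDist_top_iff]; simpa using hab
      · apply Subtype.ext
        simp [F]
  rw [countDist, Nat.card_eq_of_bijective F hbij, Nat.card_eq_fintype_card,
    card_two_subsets]

lemma copies_top_adj {r : ℕ} (x y : Fin r × Fin 2) :
    (copies r (⊤ : SimpleGraph (Fin 2))).Adj x y ↔ x.1 = y.1 ∧ x.2 ≠ y.2 := Iff.rfl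

/-- Wreath-product automorphisms of `r K₂`. -/
def wreath {r : ℕ} (τ : Equiv.Perm (Fin r)) (ε : Fin r → Equiv.Perm (Fin 2)) :
    copies r (⊤ : SimpleGraph (Fin 2)) ≃g copies r (⊤ : SimpleGraph (Fin 2)) := by
  refine ⟨Equiv.prodShear τ ε, ?_⟩
  rintro ⟨i, x⟩ ⟨j, y⟩
  rw [copies_top_adj, copies_top_adj]
  simp only [Equiv.prodShear_apply]
  constructor
  · rintro ⟨h1, h2⟩
    have hij : i = j := τ.injective h1
    subst hij
    exact ⟨rfl, fun h => h2 (by rw [h])⟩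
  · rintro ⟨rfl, h2⟩
    exact ⟨rfl, fun h => h2 ((ε i).injective h)⟩

lemma wreath_apply {r : ℕ} (τ : Equiv.Perm (Fin r)) (ε : Fin r → Equiv.Perm (Fin 2))
    (v : Fin r × Fin 2) : wreath τ ε v = (τ v.1, ε v.1 v.2) := rfl

lemma other_spec : ∀ x y : Fin 2, y ≠ x → y = Equiv.swap 0 1 x := by decide

lemma swap_ne : ∀ x : Fin 2, x ≠ Equiv.swap 0 1 x := by decide

lemma auto_partner {r : ℕ}
    (π : copies r (⊤ : SimpleGraph (Fin 2)) ≃g copies r (⊤ : SimpleGraph (Fin 2)))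
    (v : Fin r × Fin 2) :
    π (v.1, Equiv.swap 0 1 v.2) = ((π v).1, Equiv.swap 0 1 (π v).2) := by
  have hadj : (copies r (⊤ : SimpleGraph (Fin 2))).Adj v (v.1, Equiv.swap 0 1 v.2) :=
    ⟨rfl, swap_ne v.2⟩
  have hadj2 := π.map_rel_iff.mpr hadj
  rw [copies_top_adj] at hadj2
  exact Prod.ext hadj2.1.symm (other_spec _ _ (Ne.symm hadj2.2))

lemma isDist_copies_iff {r c : ℕ} (φ : Fin r × Fin 2 → Fin c) :
    IsDist (copies r (⊤ : SimpleGraph (Fin 2))) φ ↔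
      (∀ i, φ (i, 0) ≠ φ (i, 1)) ∧
      Function.Injective (fun i : Fin r => ({φ (i, 0), φ (i, 1)} : Finset (Fin c))) := by
  constructor
  · intro hd
    have hbi : ∀ i, φ (i, 0) ≠ φ (i, 1) := by
      intro i h
      set π := wreath (1 : Equiv.Perm (Fin r)) (fun k => if k = i then Equiv.swap 0 1 else 1)
        with hπdef
      have hpres : ∀ v, φ (π v) = φ v := by
        rintro ⟨k, x⟩
        rw [wreath_apply]
        by_cases hk : k = i
        · subst hk
          simp only [Equiv.Perm.coe_one, id_eq, if_pos rfl]
          fin_cases x <;> simp [h, Equiv.swap_apply_left, Equiv.swap_apply_right]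
        · simp [hk]
      have := hd π hpres (i, 0)
      rw [wreath_apply] at this
      simp at this
    refine ⟨hbi, ?_⟩
    intro i j hset
    by_contra hij
    simp only [Finset.ext_iff, Finset.mem_insert, Finset.mem_singleton] at hset
    have h0 := (hset (φ (i, 0))).mp (Or.inl rfl)
    rcases h0 with h0 | h0
    · -- straight swap of copies i and j
      have h1 : φ (i, 1) = φ (j, 1) := by
        rcases (hset (φ (i, 1))).mp (Or.inr rfl) with h1 | h1
        · exact absurd (h0 ▸ h1 : φ (i, 1) = φ (i, 0)) (Ne.symm (hbi i))
        · exact h1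
      set π := wreath (Equiv.swap i j) (fun _ => 1) with hπdef
      have hpres : ∀ v, φ (π v) = φ v := by
        rintro ⟨k, x⟩
        rw [wreath_apply]
        simp only [Equiv.Perm.coe_one, id_eq]
        by_cases hk : k = i
        · subst hk
          rw [Equiv.swap_apply_left]
          fin_cases x
          · exact h0.symm
          · exact h1.symm
        · by_cases hk' : k = j
          · subst hk'
            rw [Equiv.swap_apply_right]
            fin_cases x
            · exact h0
            · exact h1
          · rw [Equiv.swap_apply_of_ne_of_ne hk hk']
      have := hd π hpres (i, 0)
      rw [wreath_apply] at this
      simp only [Equiv.swap_apply_left] at this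
      exact hij (congrArg Prod.fst this).symm
    · -- crossed swap
      have h1 : φ (i, 1) = φ (j, 0) := by
        rcases (hset (φ (i, 1))).mp (Or.inr rfl) with h1 | h1
        · exact h1
        · exact absurd (h0 ▸ h1 : φ (i, 1) = φ (i, 0)) (Ne.symm (hbi i))
      set π := wreath (Equiv.swap i j)
        (fun k => if k = i ∨ k = j then Equiv.swap 0 1 else 1) with hπdef
      have hpres : ∀ v, φ (π v) = φ v := by
        rintro ⟨k, x⟩
        rw [wreath_apply]
        simp only []
        by_cases hk : k = i
        · subst hk
          rw [Equiv.swap_apply_left, if_pos (Or.inl rfl)]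
          fin_cases x
          · simpa [Equiv.swap_apply_left] using h0.symm
          · simpa [Equiv.swap_apply_right] using h1.symm
        · by_cases hk' : k = j
          · subst hk'
            rw [Equiv.swap_apply_right, if_pos (Or.inr rfl)]
            fin_cases x
            · simpa [Equiv.swap_apply_left] using h1
            · simpa [Equiv.swap_apply_right] using h0
          · rw [Equiv.swap_apply_of_ne_of_ne hk hk', if_neg (by tauto)]
            simp
      have := hd π hpres (i, 0)
      rw [wreath_apply] at this
      simp only [Equiv.swap_apply_left] at this
      exact hij (congrArg Prod.fst this).symm
  · rintro ⟨hbi, hinj⟩ π hπ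
    have key : ∀ i : Fin r, π (i, 0) = (i, 0) ∧ π (i, 1) = (i, 1) := by
      intro i
      have hp1 : π (i, 1) = ((π (i, 0)).1, Equiv.swap 0 1 (π (i, 0)).2) := by
        have := auto_partner π (i, 0)
        simpa using this
      have hc0 := hπ (i, 0)
      have hc1 := hπ (i, 1)
      set p := π (i, 0) with hp
      have hx : p.2 = 0 ∨ p.2 = 1 := by omega
      rcases hx with hx | hx
      · have hpp : p = (p.1, 0) := by rw [← hx]
        have e0 : φ (p.1, 0) = φ (i, 0) := by rw [← hpp]; exact hc0
        have h1 : π (i, 1) = (p.1, 1) := by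
          rw [hp1, hx]; simp [Equiv.swap_apply_left]
        have e1 : φ (p.1, 1) = φ (i, 1) := by rw [← h1]; exact hc1
        have hj : p.1 = i := hinj (by simp only [e0, e1])
        constructor
        · rw [hpp, hj]
        · rw [h1, hj]
      · exfalso
        have hpp : p = (p.1, 1) := by rw [← hx]
        have e0 : φ (p.1, 1) = φ (i, 0) := by rw [← hpp]; exact hc0
        have h1 : π (i, 1) = (p.1, 0) := by
          rw [hp1, hx]; simp [Equiv.swap_apply_right]
        have e1 : φ (p.1, 0) = φ (i, 1) := by rw [← h1]; exact hc1
        have hj : p.1 = i := hinj (by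
          show ({φ (p.1, 0), φ (p.1, 1)} : Finset (Fin c)) = {φ (i, 0), φ (i, 1)}
          rw [e0, e1, Finset.pair_comm])
        rw [hj] at e0
        exact hbi i e0.symm
    rintro ⟨i, x⟩
    fin_cases x
    · exact (key i).1
    · exact (key i).2

lemma pair_min_max {α : Type*} [LinearOrder α] {s : Finset α} (hne : s.Nonempty)
    (hs : s.card = 2) : ({s.min' hne, s.max' hne} : Finset α) = s := by
  apply Finset.eq_of_subset_of_card_le
  · exact Finset.insert_subset (s.min'_mem hne)
      (Finset.singleton_subset_iff.mpr (s.max'_mem hne))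
  · rw [hs, Finset.card_pair (ne_of_lt (s.min'_lt_max'_of_card (by omega)))]

lemma exists_isDist_copies_iff {r c : ℕ} :
    (∃ φ : Fin r × Fin 2 → Fin c, IsDist (copies r (⊤ : SimpleGraph (Fin 2))) φ) ↔
      r ≤ c.choose 2 := by
  constructor
  · rintro ⟨φ, hφ⟩
    rw [isDist_copies_iff] at hφ
    obtain ⟨hbi, hinj⟩ := hφ
    have hi2 : Function.Injective (fun i : Fin r =>
        (⟨{φ (i, 0), φ (i, 1)}, Finset.card_pair (hbi i)⟩ :
          {s : Finset (Fin c) // s.card = 2})) := by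
      intro a b h
      exact hinj (congrArg Subtype.val h)
    calc r = Fintype.card (Fin r) := (Fintype.card_fin r).symm
      _ ≤ Fintype.card {s : Finset (Fin c) // s.card = 2} :=
          Fintype.card_le_of_injective _ hi2
      _ = c.choose 2 := card_two_subsets c
  · intro h
    have hcard : Fintype.card (Fin r) ≤ Fintype.card {s : Finset (Fin c) // s.card = 2} := by
      rw [Fintype.card_fin, card_two_subsets]; exact h
    obtain ⟨f⟩ := Function.Embedding.nonempty_of_card_le hcard
    have hne : ∀ i : Fin r, ((f i).1 : Finset (Fin c)).Nonempty :=
      fun i => Finset.card_pos.mp (by rw [(f i).2]; norm_num)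
    refine ⟨fun v => if v.2 = 0 then (f v.1).1.min' (hne v.1) else (f v.1).1.max' (hne v.1), ?_⟩
    rw [isDist_copies_iff]
    have hlt : ∀ i, (f i).1.min' (hne i) < (f i).1.max' (hne i) :=
      fun i => Finset.min'_lt_max'_of_card _ (by rw [(f i).2]; norm_num)
    constructor
    · intro i
      simp only [if_pos rfl, if_neg (by decide : ¬(1 : Fin 2) = 0)]
      exact ne_of_lt (hlt i)
    · intro a b hab
      simp only [reduceIte, Fin.one_eq_zero_iff, OfNat.ofNat_ne_one, if_false] at hab
      apply f.injective
      apply Subtype.ext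
      rw [← pair_min_max (hne a) (f a).2, ← pair_min_max (hne b) (f b).2]
      rw [Finset.ext_iff] at hab ⊢
      intro x
      simp only [Finset.mem_insert, Finset.mem_singleton] at hab ⊢
      exact hab x

/-- The number of pairwise inequivalent distinguishing labelings of `K_2` using at most `c`
colors is `C(c, 2)`, and hence `D(rK_2) = min {c : C(c,2) ≥ r}` for `r ≥ 2`. -/
theorem countDist_K2_and_dist_matching (r : ℕ) (hr : 1 ≤ r) :
    (∀ c : ℕ, countDist (⊤ : SimpleGraph (Fin 2)) c = c.choose 2) ∧
    (2 ≤ r →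
      distNum (copies r (⊤ : SimpleGraph (Fin 2))) = sInf {c : ℕ | r ≤ c.choose 2}) := by
  refine ⟨countDist_top, fun _ => ?_⟩
  unfold distNum
  congr 1
  ext c
  simp only [Set.mem_setOf_eq]
  exact exists_isDist_copies_iff
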